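/- (Projection quadratic-form identity, eq. (33).) Let N ≥ 2 and 1 ≤ t < N be integers, let S ∈ ℂ^{N×N} be Hermitian positive definite with Hermitian positive definite inverse square root S^{−1/2}, and let E_t ∈ ℂ^{N×t} consist of the first t standard basis vectors of ℂ^N. Set A := S^{−1/2}E_t and P_A := A(A†A)⁻¹A†. Then for every z ∈ ℂ^N, z† S^{−1/2} (I_N − P_A) S^{−1/2} z = z_b† S_b⁻¹ z_b, where z_b ∈ ℂ^{N−t} is the vector of the last N−t entries of z and S_b ∈ ℂ^{(N−t)×(N−t)} is the trailing (N−t)×(N−t) principal submatrix of S. -/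

import Mathlib

open Matrix ComplexOrder

/-- `E_t`: the matrix whose columns are the first `t` standard basis vectors of ℂ^N,
`N = t + p`. -/
def Et (t p : ℕ) : Matrix (Fin t ⊕ Fin p) (Fin t) ℂ :=
  Matrix.of fun i j => if i = Sum.inl j then 1 else 0

/-- The orthogonal projection `P_A = A (A† A)⁻¹ A†` onto the column space of `A`. -/
noncomputable def proj {n : Type*} {k : Type*} [Fintype n] [Fintype k] [DecidableEq n]
    [DecidableEq k] (A : Matrix n k ℂ) : Matrix n n ℂ :=
  A * (Aᴴ * A)⁻¹ * Aᴴ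

section aux
variable {t p : ℕ}

lemma mul_Et (M : Matrix (Fin t ⊕ Fin p) (Fin t ⊕ Fin p) ℂ) :
    M * Et t p = Matrix.fromRows M.toBlocks₁₁ M.toBlocks₂₁ := by
  ext i j
  cases i <;>
    simp [Matrix.mul_apply, Et, Matrix.toBlocks₁₁, Matrix.toBlocks₂₁]

lemma Et_conjTranspose_mul (M : Matrix (Fin t ⊕ Fin p) (Fin t ⊕ Fin p) ℂ) :
    (Et t p)ᴴ * M = Matrix.fromCols M.toBlocks₁₁ M.toBlocks₁₂ := by
  ext i j
  cases j <;>
    simp [Matrix.mul_apply, Et, Matrix.fromCols, Matrix.toBlocks₁₁, Matrix.toBlocks₁₂,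
      Matrix.conjTranspose_apply, apply_ite]

lemma posDef_inl {M : Matrix (Fin t ⊕ Fin p) (Fin t ⊕ Fin p) ℂ} (hM : M.PosDef) :
    (M.submatrix Sum.inl Sum.inl).PosDef := by
  exact hM.submatrix Sum.inl_injective

lemma posDef_inr {M : Matrix (Fin t ⊕ Fin p) (Fin t ⊕ Fin p) ℂ} (hM : M.PosDef) :
    (M.submatrix Sum.inr Sum.inr).PosDef := by
  exact hM.submatrix Sum.inr_injective

end aux

/-- Projection quadratic-form identity (eq. (33)): with `A = S^{-1/2} E_t`,
`z† S^{-1/2} (I − P_A) S^{-1/2} z = z_b† S_b⁻¹ z_b`, where `z_b` consists of the last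
`N − t` entries of `z` and `S_b` is the trailing principal submatrix of `S`.
Here `R` denotes the Hermitian positive definite inverse square root `S^{-1/2}`,
i.e. `R` is positive definite with `R * R = S⁻¹`. -/
theorem stmt7 (t p : ℕ) (ht : 1 ≤ t) (hp : 1 ≤ p)
    (S : Matrix (Fin t ⊕ Fin p) (Fin t ⊕ Fin p) ℂ) (hS : S.PosDef)
    (R : Matrix (Fin t ⊕ Fin p) (Fin t ⊕ Fin p) ℂ) (hR : R.PosDef) (hRS : R * R = S⁻¹)
    (z : Fin t ⊕ Fin p → ℂ) :
    star z ⬝ᵥ ((R * (1 - proj (R * Et t p)) * R) *ᵥ z) =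
      star (fun i => z (Sum.inr i)) ⬝ᵥ
        ((S.submatrix Sum.inr Sum.inr)⁻¹ *ᵥ fun i => z (Sum.inr i)) := by
  set M := S⁻¹ with hM
  set α := M.toBlocks₁₁
  set β := M.toBlocks₁₂
  set γ := M.toBlocks₂₁
  set δ := M.toBlocks₂₂
  have hMpd : M.PosDef := hS.inv
  have hα : α.PosDef := posDef_inl hMpd
  have hαdet : IsUnit α.det := (Matrix.isUnit_iff_isUnit_det _).1 hα.isUnit
  have hαinv : α * α⁻¹ = 1 := Matrix.mul_nonsing_inv _ hαdet
  have hαinv' : α⁻¹ * α = 1 := Matrix.nonsing_inv_mul _ hαdet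
  -- the Gram matrix
  have hA : (R * Et t p)ᴴ * (R * Et t p) = α := by
    rw [Matrix.conjTranspose_mul, hR.1.eq]
    calc (Et t p)ᴴ * R * (R * Et t p) = (Et t p)ᴴ * (R * R) * Et t p := by
          simp only [Matrix.mul_assoc]
      _ = Matrix.fromCols α β * Et t p := by rw [hRS, Et_conjTranspose_mul]
      _ = α := by
          ext i j
          rw [Matrix.mul_apply]
          simp [Matrix.mul_apply, Et, Fintype.sum_sum_type]
  -- the key matrix identity
  have hkey : R * (1 - proj (R * Et t p)) * R =
      Matrix.fromBlocks 0 0 0 (δ - γ * α⁻¹ * β) := by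
    have hPA : proj (R * Et t p) = R * Et t p * α⁻¹ * ((Et t p)ᴴ * R) := by
      unfold proj
      rw [hA, Matrix.conjTranspose_mul, hR.1.eq, Matrix.mul_assoc]
    have h1 : R * (1 - proj (R * Et t p)) * R =
        M - M * Et t p * α⁻¹ * ((Et t p)ᴴ * M) := by
      rw [hPA, Matrix.mul_sub, Matrix.sub_mul, Matrix.mul_one, hRS]
      congr 1
      calc R * (R * Et t p * α⁻¹ * ((Et t p)ᴴ * R)) * R
          = (R * R) * Et t p * α⁻¹ * ((Et t p)ᴴ * (R * R)) := by
            simp only [Matrix.mul_assoc]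
        _ = M * Et t p * α⁻¹ * ((Et t p)ᴴ * M) := by rw [hRS]
    rw [h1, mul_Et, Et_conjTranspose_mul, Matrix.fromRows_mul,
      Matrix.fromRows_mul_fromCols]
    have h2 : α * α⁻¹ * α = α := by rw [hαinv, Matrix.one_mul]
    have h3 : γ * α⁻¹ * α = γ := by
      rw [Matrix.mul_assoc, hαinv', Matrix.mul_one]
    have h4 : α * α⁻¹ * β = β := by rw [hαinv, Matrix.one_mul]
    rw [h2, h3, h4]
    nth_rewrite 1 [← Matrix.fromBlocks_toBlocks M]
    ext i j
    rcases i with i | i <;> rcases j with j | j <;>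
      simp [Matrix.fromBlocks, Matrix.sub_apply, α, β, γ, δ]
  -- the Schur complement identity
  have hMS : M * S = 1 := Matrix.nonsing_inv_mul S ((Matrix.isUnit_iff_isUnit_det _).1 hS.isUnit)
  rw [← Matrix.fromBlocks_toBlocks M, ← Matrix.fromBlocks_toBlocks S,
    Matrix.fromBlocks_multiply, ← Matrix.fromBlocks_one] at hMS
  obtain ⟨h11, h12, h21, h22⟩ := Matrix.fromBlocks_inj.mp hMS
  have hb : β * S.toBlocks₂₂ = -(α * S.toBlocks₁₂) := by
    rw [eq_neg_iff_add_eq_zero, add_comm]; exact h12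
  have hinv : (δ - γ * α⁻¹ * β) * S.toBlocks₂₂ = 1 := by
    calc (δ - γ * α⁻¹ * β) * S.toBlocks₂₂
        = δ * S.toBlocks₂₂ - γ * (α⁻¹ * (β * S.toBlocks₂₂)) := by
          rw [Matrix.sub_mul]; simp only [Matrix.mul_assoc]
      _ = δ * S.toBlocks₂₂ + γ * (α⁻¹ * (α * S.toBlocks₁₂)) := by
          rw [hb, Matrix.mul_neg, Matrix.mul_neg, sub_neg_eq_add]
      _ = δ * S.toBlocks₂₂ + γ * S.toBlocks₁₂ := by
          rw [← Matrix.mul_assoc α⁻¹ α, hαinv', Matrix.one_mul]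
      _ = 1 := by rw [add_comm]; exact h22
  have hdd : S.toBlocks₂₂ = S.submatrix Sum.inr Sum.inr := rfl
  have hSchur : (S.submatrix Sum.inr Sum.inr)⁻¹ = δ - γ * α⁻¹ * β := by
    rw [← hdd]; exact Matrix.inv_eq_left_inv hinv
  rw [hkey, hSchur]
  simp [dotProduct, Matrix.mulVec, Fintype.sum_sum_type, Matrix.fromBlocks]
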